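/- Let v₁, …, v_n : Ω → [-1, 1] be measurable functions on a probability space, let S = (ω₁, …, ω_N) be points of Ω, and let ε₁, …, ε_N be i.i.d. Rademacher random variables. Then the empirical Rademacher complexity of the finite class satisfies E[ max_{1 ≤ i ≤ n} | (1/N) Σ_{j=1}^N ε_j v_i(ω_j) | ] ≤ √(2 log(2n) / N). (Massart's finite class lemma applied to functions bounded by 1.) -/

import Mathlib

open MeasureTheory

private lemma mgf_row (N : ℕ) (hN : 0 < N) (L : ℝ) (c : Fin N → ℝ)
    (hc : ∀ j, |c j| ≤ 1) :
    ∑ ε : Fin N → Bool, ((2:ℝ)^N)⁻¹ *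
      Real.exp (L * ((1 / (N:ℝ)) * ∑ j, (if ε j then (1:ℝ) else -1) * c j))
      ≤ Real.exp (L^2 / (2*N)) := by
  have hNR : (0:ℝ) < N := by exact_mod_cast hN
  have hexp : ∀ ε : Fin N → Bool,
      Real.exp (L * ((1 / (N:ℝ)) * ∑ j, (if ε j then (1:ℝ) else -1) * c j))
        = ∏ j, Real.exp ((L / N) * ((if ε j then (1:ℝ) else -1) * c j)) := by
    intro ε
    rw [← Real.exp_sum, ← Finset.mul_sum]
    ring_nf
  calc ∑ ε : Fin N → Bool, ((2:ℝ)^N)⁻¹ *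
        Real.exp (L * ((1 / (N:ℝ)) * ∑ j, (if ε j then (1:ℝ) else -1) * c j))
      = ((2:ℝ)^N)⁻¹ * ∑ ε : Fin N → Bool,
          ∏ j, Real.exp ((L / N) * ((if ε j then (1:ℝ) else -1) * c j)) := by
        rw [← Finset.mul_sum]
        congr 1
        exact Finset.sum_congr rfl fun ε _ => hexp ε
    _ = ((2:ℝ)^N)⁻¹ * ∏ j : Fin N, ∑ b : Bool,
          Real.exp ((L / N) * ((if b then (1:ℝ) else -1) * c j)) := by
        rw [Finset.prod_univ_sum (fun _ => (Finset.univ : Finset Bool))]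
        congr 1
    _ = ∏ j : Fin N, Real.cosh ((L / N) * c j) := by
        have h2 : ((2:ℝ)^N)⁻¹ = ∏ _j : Fin N, (2:ℝ)⁻¹ := by
          rw [Finset.prod_const, Finset.card_univ, Fintype.card_fin, inv_pow]
        rw [h2, ← Finset.prod_mul_distrib]
        apply Finset.prod_congr rfl
        intro j _
        rw [Fintype.sum_bool, Real.cosh_eq]
        simp
        ring
    _ ≤ ∏ j : Fin N, Real.exp (((L / N) * c j)^2 / 2) := by
        apply Finset.prod_le_prod
        · intro j _; positivity
        · intro j _; exact Real.cosh_le_exp_half_sq _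
    _ ≤ Real.exp (L^2 / (2*N)) := by
        rw [← Real.exp_sum]
        apply Real.exp_le_exp.mpr
        calc ∑ j : Fin N, ((L / N) * c j)^2 / 2
            ≤ ∑ j : Fin N, (L/N)^2 / 2 := by
              apply Finset.sum_le_sum
              intro j _
              obtain ⟨h1, h2⟩ := abs_le.mp (hc j)
              have hsq : (c j)^2 ≤ 1 := by nlinarith
              have : (L / ↑N * c j)^2 = (L/↑N)^2 * (c j)^2 := by ring
              rw [this]
              nlinarith [sq_nonneg (L/N)]
          _ = L^2 / (2*N) := by
              rw [Finset.sum_const, Finset.card_univ, Fintype.card_fin]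
              field_simp
              rw [nsmul_eq_mul, ← mul_assoc, mul_div_assoc', div_eq_iff (by positivity)]
              ring


/-- Massart's finite class lemma: for functions `v₁,…,v_n` bounded by `1`, fixed sample
points `ω₁,…,ω_N`, and i.i.d. Rademacher signs (modeled by the uniform distribution on
`Fin N → Bool`), the expected maximal absolute Rademacher average is at most
`√(2 log(2n)/N)`. -/
theorem stmt_11 {Ω : Type*} (n N : ℕ) (hn : 0 < n) (hN : 0 < N)
    (v : Fin n → Ω → ℝ) (hv : ∀ i ω, v i ω ∈ Set.Icc (-1 : ℝ) 1)
    (ωs : Fin N → Ω) :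
    ∫ ε : Fin N → Bool,
        (Finset.univ.sup' (Finset.univ_nonempty_iff.mpr (Fin.pos_iff_nonempty.mp hn))
          fun i : Fin n =>
            |(1 / (N : ℝ)) * ∑ j : Fin N, (if ε j then (1 : ℝ) else -1) * v i (ωs j)|)
        ∂(PMF.uniformOfFintype (Fin N → Bool)).toMeasure
      ≤ Real.sqrt (2 * Real.log (2 * n) / N) := by
  
  have hNR : (0:ℝ) < N := by exact_mod_cast hN
  have hne : (Finset.univ : Finset (Fin n)).Nonempty :=
    Finset.univ_nonempty_iff.mpr (Fin.pos_iff_nonempty.mp hn)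
  set f : Fin n → (Fin N → Bool) → ℝ := fun i ε =>
    (1 / (N : ℝ)) * ∑ j : Fin N, (if ε j then (1 : ℝ) else -1) * v i (ωs j) with hfdef
  set g : (Fin N → Bool) → ℝ := fun ε => Finset.univ.sup' hne (fun i => |f i ε|) with hgdef
  set w : ℝ := ((2:ℝ)^N)⁻¹ with hwdef
  have hw0 : (0:ℝ) < w := by positivity
  have hwsum : ∑ _ε : Fin N → Bool, w = 1 := by
    rw [Finset.sum_const, Finset.card_univ]
    simp [Fintype.card_fun, hwdef]
  set A : ℝ := Real.log (2 * n) with hAdef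
  have hA : 0 < A := Real.log_pos (by
    have : (1:ℝ) ≤ n := by exact_mod_cast hn
    linarith)
  set L : ℝ := Real.sqrt (2 * N * A) with hLdef
  have hL : 0 < L := Real.sqrt_pos.mpr (by positivity)
  have hL2 : L^2 = 2 * N * A := Real.sq_sqrt (by positivity)
  -- bound on |v|
  have hc : ∀ i j, |v i (ωs j)| ≤ 1 := fun i j =>
    abs_le.mpr ⟨(hv i (ωs j)).1, (hv i (ωs j)).2⟩
  -- Jensen
  have jensen : Real.exp (∑ ε : Fin N → Bool, w • (L * g ε))
      ≤ ∑ ε : Fin N → Bool, w • Real.exp (L * g ε) :=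
    convexOn_exp.map_sum_le (fun _ _ => le_of_lt hw0) hwsum (fun _ _ => Set.mem_univ _)
  -- pointwise bound
  have hpoint : ∀ ε, Real.exp (L * g ε)
      ≤ ∑ i : Fin n, (Real.exp (L * f i ε) + Real.exp (-L * f i ε)) := by
    intro ε
    obtain ⟨i₀, _, hi₀⟩ := Finset.exists_mem_eq_sup' hne (fun i => |f i ε|)
    have h1 : Real.exp (L * g ε) ≤ Real.exp (L * f i₀ ε) + Real.exp (-L * f i₀ ε) := by
      have hg' : g ε = |f i₀ ε| := hi₀
      rw [hg']
      rcases abs_cases (f i₀ ε) with ⟨h, _⟩ | ⟨h, _⟩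
      · rw [h]
        nlinarith [Real.exp_pos (-L * f i₀ ε)]
      · rw [h, mul_neg, ← neg_mul]
        nlinarith [Real.exp_pos (L * f i₀ ε)]
    refine h1.trans (Finset.single_le_sum (f := fun i =>
      Real.exp (L * f i ε) + Real.exp (-L * f i ε)) (fun i _ => by positivity)
      (Finset.mem_univ i₀))
  -- mgf bounds
  have hmgf : ∀ (M : ℝ) (i : Fin n),
      ∑ ε : Fin N → Bool, w * Real.exp (M * f i ε) ≤ Real.exp (M^2 / (2*N)) :=
    fun M i => mgf_row N hN M (fun j => v i (ωs j)) (fun j => hc i j)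
  -- combine
  set E : ℝ := ∑ ε : Fin N → Bool, w * g ε with hEdef
  have hmain : Real.exp (L * E) ≤ 2 * n * Real.exp (L^2 / (2*N)) := by
    have h0 : ∑ ε : Fin N → Bool, w • (L * g ε) = L * E := by
      rw [hEdef, Finset.mul_sum]
      exact Finset.sum_congr rfl fun ε _ => by simp [smul_eq_mul]; ring
    calc Real.exp (L * E) ≤ ∑ ε : Fin N → Bool, w • Real.exp (L * g ε) := by
          rw [← h0]; exact jensen
      _ ≤ ∑ ε : Fin N → Bool, w * ∑ i : Fin n,
            (Real.exp (L * f i ε) + Real.exp (-L * f i ε)) := by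
          apply Finset.sum_le_sum
          intro ε _
          rw [smul_eq_mul]
          exact mul_le_mul_of_nonneg_left (hpoint ε) (le_of_lt hw0)
      _ = ∑ i : Fin n, ((∑ ε : Fin N → Bool, w * Real.exp (L * f i ε))
            + ∑ ε : Fin N → Bool, w * Real.exp (-L * f i ε)) := by
          simp only [Finset.mul_sum, mul_add]
          rw [Finset.sum_comm]
          exact Finset.sum_congr rfl fun i _ => Finset.sum_add_distrib
      _ ≤ ∑ i : Fin n, (Real.exp (L^2 / (2*N)) + Real.exp (L^2 / (2*N))) := by
          apply Finset.sum_le_sum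
          intro i _
          have h2 := hmgf (-L) i
          rw [neg_sq] at h2
          exact add_le_add (hmgf L i) h2
      _ = 2 * n * Real.exp (L^2 / (2*N)) := by
          rw [Finset.sum_const, Finset.card_univ, Fintype.card_fin]
          ring
  have hlog : L * E ≤ 2 * A := by
    have h1 : L * E = Real.log (Real.exp (L * E)) := (Real.log_exp _).symm
    have h2 : Real.log (Real.exp (L * E)) ≤ Real.log (2 * n * Real.exp (L^2 / (2*N))) :=
      Real.log_le_log (Real.exp_pos _) hmain
    have h3 : Real.log (2 * n * Real.exp (L^2 / (2*N))) = A + L^2 / (2*N) := by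
      rw [Real.log_mul (by positivity) (Real.exp_ne_zero _), Real.log_exp, hAdef]
    have h4 : L^2 / (2*N) = A := by rw [hL2]; field_simp
    rw [h1]
    calc Real.log (Real.exp (L * E)) ≤ A + L^2/(2*N) := h3 ▸ h2
      _ = 2 * A := by rw [h4]; ring
  have hE : E ≤ 2 * A / L := (le_div_iff₀ hL).mpr (by linarith [hlog, mul_comm L E])
  have hfin : 2 * A / L = Real.sqrt (2 * A / N) := by
    have hsq : (2 * A / L)^2 = 2 * A / N := by
      rw [div_pow, hL2]
      field_simp
    rw [← hsq, Real.sqrt_sq (by positivity)]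
  rw [PMF.integral_eq_sum]
  have hwv : ∀ ε : Fin N → Bool, ((PMF.uniformOfFintype (Fin N → Bool)) ε).toReal = w := by
    intro ε
    simp [PMF.uniformOfFintype_apply, Fintype.card_fun, hwdef]
  calc ∑ ε : Fin N → Bool, ((PMF.uniformOfFintype (Fin N → Bool)) ε).toReal •
        ((Finset.univ.sup' (Finset.univ_nonempty_iff.mpr (Fin.pos_iff_nonempty.mp hn))
          fun i : Fin n =>
            |(1 / (N : ℝ)) * ∑ j : Fin N, (if ε j then (1 : ℝ) else -1) * v i (ωs j)|))
      = E := by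
        rw [hEdef]
        exact Finset.sum_congr rfl fun ε _ => by rw [hwv ε, smul_eq_mul]
    _ ≤ 2 * A / L := hE
    _ = Real.sqrt (2 * A / N) := hfin
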